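/- Let C be a configuration on the fuse graph F_{m,n} and let A = ∑_{j=m+1}^{n} ⌊C(v_j)/2⌋ be the number of pebbles that can be moved from the pendant vertices to v_m. If Y := ∑_{k=0}^{m-1} C(v_{k+1})/2^k + A/2^{m-1} < 1, then C is not v_1-solvable. -/

import Mathlib

/-- A single pebbling step on a graph `G`: remove two pebbles from a vertex `u`
and place one pebble on a neighbor `v` of `u`. -/
def PebStep {V : Type*} [DecidableEq V] (G : SimpleGraph V) (C C' : V → ℕ) : Prop :=
  ∃ u v : V, G.Adj u v ∧ 2 ≤ C u ∧
    C' = fun w => if w = u then C u - 2 else if w = v then C w + 1 else C w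

/-- The fuse graph `F_{m,n}` on vertices `v_1, …, v_n` (0-indexed as `Fin n`):
a path `v_1 — v_2 — ⋯ — v_m` together with pendant vertices `v_{m+1}, …, v_n`
each adjacent to `v_m`. -/
def fuse (n m : ℕ) : SimpleGraph (Fin n) :=
  SimpleGraph.fromRel (fun i j =>
    (i.val + 1 = j.val ∧ j.val ≤ m - 1) ∨ (m ≤ j.val ∧ i.val = m - 1))

private lemma sum_diff_one {α : Type*} [DecidableEq α] (s : Finset α) (p : α) (hp : p ∈ s)
    (f g : α → ℝ) (h : ∀ w ∈ s, w ≠ p → f w = g w) :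
    ∑ w ∈ s, f w = ∑ w ∈ s, g w + (f p - g p) := by
  rw [← Finset.add_sum_erase s f hp, ← Finset.add_sum_erase s g hp]
  rw [Finset.sum_congr rfl fun w hw =>
    h w (Finset.mem_of_mem_erase hw) (Finset.ne_of_mem_erase hw)]
  ring

private lemma sum_diff_two {α : Type*} [DecidableEq α] (s : Finset α) (p q : α) (hpq : p ≠ q)
    (hp : p ∈ s) (hq : q ∈ s) (f g : α → ℝ) (h : ∀ w ∈ s, w ≠ p → w ≠ q → f w = g w) :
    ∑ w ∈ s, f w = ∑ w ∈ s, g w + (f p - g p) + (f q - g q) := by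
  rw [← Finset.add_sum_erase s f hp, ← Finset.add_sum_erase s g hp]
  have hq' : q ∈ s.erase p := Finset.mem_erase.mpr ⟨fun h' => hpq h'.symm, hq⟩
  rw [← Finset.add_sum_erase _ f hq', ← Finset.add_sum_erase _ g hq']
  rw [Finset.sum_congr rfl fun w hw =>
    h w (Finset.mem_of_mem_erase (Finset.mem_of_mem_erase hw))
      (Finset.ne_of_mem_erase (Finset.mem_of_mem_erase hw)) (Finset.ne_of_mem_erase hw)]
  ring

private lemma nat_sum_diff_one {α : Type*} [DecidableEq α] (s : Finset α) (p : α) (hp : p ∈ s)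
    (f g : α → ℕ) (h : ∀ w ∈ s, w ≠ p → f w = g w) :
    ∑ w ∈ s, f w + g p = ∑ w ∈ s, g w + f p := by
  rw [← Finset.add_sum_erase s f hp, ← Finset.add_sum_erase s g hp]
  rw [Finset.sum_congr rfl fun w hw =>
    h w (Finset.mem_of_mem_erase hw) (Finset.ne_of_mem_erase hw)]
  ring

noncomputable def Wt (n m : ℕ) (D : Fin n → ℕ) : ℝ :=
  (∑ v ∈ Finset.univ.filter (fun v : Fin n => v.val < m), (D v : ℝ) / 2 ^ v.val)
    + ((∑ v ∈ Finset.univ.filter (fun v : Fin n => m ≤ v.val), D v / 2 : ℕ) : ℝ) / 2 ^ (m - 1)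

private lemma step_mono (n m : ℕ) (hm : 1 ≤ m) (D D' : Fin n → ℕ)
    (h : PebStep (fuse n m) D D') : Wt n m D' ≤ Wt n m D := by
  obtain ⟨u, v, hadj, h2, rfl⟩ := h
  rw [fuse, SimpleGraph.fromRel_adj] at hadj
  obtain ⟨hne, hcase⟩ := hadj
  set A := Finset.univ.filter (fun v : Fin n => v.val < m) with hA
  set B := Finset.univ.filter (fun v : Fin n => m ≤ v.val) with hB
  set F : Fin n → ℕ := fun w => if w = u then D u - 2 else if w = v then D w + 1 else D w with hF
  have hFu : F u = D u - 2 := by simp [hF]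
  have hFv : F v = D v + 1 := by simp [hF, hne.symm]
  have hFo : ∀ w, w ≠ u → w ≠ v → F w = D w := by
    intro w h1 h2; simp [hF, h1, h2]
  have memA : ∀ w : Fin n, w.val < m → w ∈ A := fun w hw =>
    Finset.mem_filter.mpr ⟨Finset.mem_univ _, hw⟩
  have memB : ∀ w : Fin n, m ≤ w.val → w ∈ B := fun w hw =>
    Finset.mem_filter.mpr ⟨Finset.mem_univ _, hw⟩
  have valA : ∀ w ∈ A, w.val < m := fun w hw => (Finset.mem_filter.mp hw).2
  have valB : ∀ w ∈ B, m ≤ w.val := fun w hw => (Finset.mem_filter.mp hw).2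
  have hpow : (0:ℝ) < 2 ^ (m-1) := by positivity
  unfold Wt
  have hval_ne : ∀ {a b : Fin n}, a.val ≠ b.val → a ≠ b :=
    fun h e => h (congrArg Fin.val e)
  rcases hcase with (⟨hc1, hc2⟩ | ⟨hc1, hc2⟩) | (⟨hc1, hc2⟩ | ⟨hc1, hc2⟩)
  · -- u.val + 1 = v.val, v.val ≤ m - 1 : both on path, moving away from v1
    have huv : u.val < m := by omega
    have hvv : v.val < m := by omega
    have hS1 : ∑ w ∈ A, (F w : ℝ) / 2 ^ w.val
        = ∑ w ∈ A, (D w : ℝ) / 2 ^ w.val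
          + ((F u : ℝ)/2^u.val - (D u : ℝ)/2^u.val)
          + ((F v : ℝ)/2^v.val - (D v : ℝ)/2^v.val) :=
      sum_diff_two A u v hne (memA u huv) (memA v hvv) _ _
        (fun w _ hw1 hw2 => by rw [hFo w hw1 hw2])
    have hS2 : ∑ w ∈ B, F w / 2 = ∑ w ∈ B, D w / 2 :=
      Finset.sum_congr rfl fun w hw => by
        have := valB w hw
        rw [hFo w (hval_ne (by omega)) (hval_ne (by omega))]
    have hcu : (F u : ℝ) = (D u : ℝ) - 2 := by rw [hFu]; push_cast [h2]; ring
    have hcv : (F v : ℝ) = (D v : ℝ) + 1 := by rw [hFv]; push_cast; ring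
    have hp : (0:ℝ) < 2 ^ u.val := by positivity
    have hv2 : (2:ℝ) ^ v.val = 2 ^ u.val * 2 := by rw [← hc1, pow_succ]
    have key : ((F u : ℝ)/2^u.val - (D u : ℝ)/2^u.val)
        + ((F v : ℝ)/2^v.val - (D v : ℝ)/2^v.val) ≤ 0 := by
      have e : ((D u : ℝ) - 2)/2^u.val - (D u : ℝ)/2^u.val
          + (((D v : ℝ) + 1)/(2^u.val*2) - (D v : ℝ)/(2^u.val*2)) = -3 / (2^u.val*2) := by
        field_simp
        ring
      rw [hcu, hcv, hv2, e]
      apply div_nonpos_of_nonpos_of_nonneg <;> [norm_num; positivity]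
    rw [hS2]
    linarith [hS1, key]
  · -- m ≤ v.val, u.val = m - 1 : path tip to a pendant
    have huv : u.val < m := by omega
    have hS1 : ∑ w ∈ A, (F w : ℝ) / 2 ^ w.val
        = ∑ w ∈ A, (D w : ℝ) / 2 ^ w.val
          + ((F u : ℝ)/2^u.val - (D u : ℝ)/2^u.val) :=
      sum_diff_one A u (memA u huv) _ _
        (fun w hw hw1 => by
          have := valA w hw
          rw [hFo w hw1 (hval_ne (by omega))])
    have hS2 : ∑ w ∈ B, F w / 2 + D v / 2 = ∑ w ∈ B, D w / 2 + F v / 2 :=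
      nat_sum_diff_one B v (memB v hc1) _ _
        (fun w hw hw1 =>
          congrArg (· / 2) (hFo w (hval_ne (by have := valB w hw; omega)) hw1))
    have hFv2 : F v / 2 ≤ D v / 2 + 1 := by rw [hFv]; omega
    have hle : ∑ w ∈ B, F w / 2 ≤ ∑ w ∈ B, D w / 2 + 1 := by omega
    have hcast : ((∑ w ∈ B, F w / 2 : ℕ) : ℝ) ≤ ((∑ w ∈ B, D w / 2 : ℕ) : ℝ) + 1 := by
      exact_mod_cast hle
    have hcu : (F u : ℝ) = (D u : ℝ) - 2 := by rw [hFu]; push_cast [h2]; ring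
    have hu2 : (2:ℝ) ^ u.val = 2 ^ (m - 1) := by rw [hc2]
    have hdiv : ((∑ w ∈ B, F w / 2 : ℕ) : ℝ) / 2 ^ (m-1)
        ≤ ((∑ w ∈ B, D w / 2 : ℕ) : ℝ) / 2 ^ (m-1) + 1 / 2 ^ (m-1) := by
      rw [← add_div]; gcongr
    rw [hS1, hcu, hu2]
    have : ((D u : ℝ) - 2) / 2 ^ (m-1) - (D u : ℝ) / 2 ^ (m-1) = -(2 / 2 ^ (m-1)) := by ring
    rw [this]
    have h12 : 1 / (2:ℝ) ^ (m-1) ≤ 2 / 2 ^ (m-1) := by gcongr <;> norm_num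
    linarith [hdiv]
  · -- v.val + 1 = u.val, u.val ≤ m - 1 : path, moving toward v1
    have huv : u.val < m := by omega
    have hvv : v.val < m := by omega
    have hS1 : ∑ w ∈ A, (F w : ℝ) / 2 ^ w.val
        = ∑ w ∈ A, (D w : ℝ) / 2 ^ w.val
          + ((F u : ℝ)/2^u.val - (D u : ℝ)/2^u.val)
          + ((F v : ℝ)/2^v.val - (D v : ℝ)/2^v.val) :=
      sum_diff_two A u v hne (memA u huv) (memA v hvv) _ _
        (fun w _ hw1 hw2 => by rw [hFo w hw1 hw2])
    have hS2 : ∑ w ∈ B, F w / 2 = ∑ w ∈ B, D w / 2 :=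
      Finset.sum_congr rfl fun w hw => by
        have := valB w hw
        rw [hFo w (hval_ne (by omega)) (hval_ne (by omega))]
    have hcu : (F u : ℝ) = (D u : ℝ) - 2 := by rw [hFu]; push_cast [h2]; ring
    have hcv : (F v : ℝ) = (D v : ℝ) + 1 := by rw [hFv]; push_cast; ring
    have hp : (0:ℝ) < 2 ^ v.val := by positivity
    have hu2 : (2:ℝ) ^ u.val = 2 ^ v.val * 2 := by rw [← hc1, pow_succ]
    have key : ((F u : ℝ)/2^u.val - (D u : ℝ)/2^u.val)
        + ((F v : ℝ)/2^v.val - (D v : ℝ)/2^v.val) ≤ 0 := by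
      have e : ((D u : ℝ) - 2)/(2^v.val*2) - (D u : ℝ)/(2^v.val*2)
          + (((D v : ℝ) + 1)/2^v.val - (D v : ℝ)/2^v.val) = 0 := by
        field_simp
        ring
      rw [hcu, hcv, hu2, e]
    rw [hS2]
    linarith [hS1, key]
  · -- m ≤ u.val, v.val = m - 1 : pendant to path tip
    have hvv : v.val < m := by omega
    have hS1 : ∑ w ∈ A, (F w : ℝ) / 2 ^ w.val
        = ∑ w ∈ A, (D w : ℝ) / 2 ^ w.val
          + ((F v : ℝ)/2^v.val - (D v : ℝ)/2^v.val) :=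
      sum_diff_one A v (memA v hvv) _ _
        (fun w hw hw1 => by
          have := valA w hw
          rw [hFo w (hval_ne (by omega)) hw1])
    have hS2 : ∑ w ∈ B, F w / 2 + D u / 2 = ∑ w ∈ B, D w / 2 + F u / 2 :=
      nat_sum_diff_one B u (memB u hc1) _ _
        (fun w hw hw1 =>
          congrArg (· / 2) (hFo w hw1 (hval_ne (by have := valB w hw; omega))))
    have hFu2 : F u / 2 + 1 = D u / 2 := by rw [hFu]; omega
    have heq : ∑ w ∈ B, F w / 2 + 1 = ∑ w ∈ B, D w / 2 := by omega
    have hcast : ((∑ w ∈ B, F w / 2 : ℕ) : ℝ) = ((∑ w ∈ B, D w / 2 : ℕ) : ℝ) - 1 := by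
      have := heq
      push_cast [← this]
      ring
    have hcv : (F v : ℝ) = (D v : ℝ) + 1 := by rw [hFv]; push_cast; ring
    have hv2 : (2:ℝ) ^ v.val = 2 ^ (m - 1) := by rw [hc2]
    rw [hS1, hcv, hv2, hcast]
    have e1 : ((D v : ℝ) + 1) / 2 ^ (m-1) - (D v : ℝ) / 2 ^ (m-1) = 1 / 2 ^ (m-1) := by ring
    have e2 : (((∑ w ∈ B, D w / 2 : ℕ) : ℝ) - 1) / 2 ^ (m-1)
        = ((∑ w ∈ B, D w / 2 : ℕ) : ℝ) / 2 ^ (m-1) - 1 / 2 ^ (m-1) := by ring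
    rw [e1, e2]
    linarith

theorem stmt12 (n m : ℕ) (hm : 1 ≤ m) (hmn : m ≤ n) (C : Fin n → ℕ)
    (hY : (∑ v ∈ Finset.univ.filter (fun v : Fin n => v.val < m), (C v : ℝ) / 2 ^ v.val)
        + ((∑ v ∈ Finset.univ.filter (fun v : Fin n => m ≤ v.val), C v / 2 : ℕ) : ℝ)
            / 2 ^ (m - 1) < 1) :
    ¬ ∃ C', Relation.ReflTransGen (PebStep (fuse n m)) C C' ∧ 1 ≤ C' ⟨0, by omega⟩ := by
  rintro ⟨C', hsteps, hone⟩
  have mono : Wt n m C' ≤ Wt n m C := by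
    clear hone
    induction hsteps with
    | refl => exact le_refl _
    | tail _ hstep ih => exact le_trans (step_mono n m hm _ _ hstep) ih
  have lower : (1:ℝ) ≤ Wt n m C' := by
    unfold Wt
    have hz : (⟨0, by omega⟩ : Fin n) ∈ Finset.univ.filter (fun v : Fin n => v.val < m) :=
      Finset.mem_filter.mpr ⟨Finset.mem_univ _, by simpa using Nat.one_le_iff_ne_zero.mp hm |>.bot_lt⟩
    have h1 : (C' ⟨0, by omega⟩ : ℝ) / 2 ^ (0:ℕ)
        ≤ ∑ v ∈ Finset.univ.filter (fun v : Fin n => v.val < m), (C' v : ℝ) / 2 ^ v.val := by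
      exact Finset.single_le_sum (f := fun v : Fin n => (C' v : ℝ) / 2 ^ v.val)
        (fun w _ => by positivity) hz
    have h2 : (0:ℝ) ≤ ((∑ v ∈ Finset.univ.filter (fun v : Fin n => m ≤ v.val), C' v / 2 : ℕ) : ℝ)
        / 2 ^ (m - 1) := by positivity
    have h3 : (1:ℝ) ≤ (C' ⟨0, by omega⟩ : ℝ) / 2 ^ (0:ℕ) := by
      simp only [pow_zero, div_one]
      exact_mod_cast hone
    linarith
  have : Wt n m C < 1 := hY
  linarith
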